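/- Let G be a group generated by a finite subset S, and assume G is amenable, i.e. for every nonempty finite T ⊆ G and δ > 0 there exists a nonempty finite F ⊆ G with #(F \ F·g) ≤ δ·#F for all g ∈ T. Let ε > 0 and D ∈ ℕ. Then the following are equivalent: (1) there exists f : G → [0,∞) with Σ_{γ∈G} f(γ)² = 1, Σ_{γ∈G} (f(γ) − f(γs))² ≤ ε² for every s ∈ S, and supp(f) ⊆ B(1_G, D); (2) there exists a map ξ assigning to each x ∈ G a function ξ_x : G → [0,∞) with Σ_{γ∈G} ξ_x(γ)² = 1, such that Σ_{γ∈G} (ξ_x(γ) − ξ_y(γ))² ≤ ε² whenever x⁻¹y ∈ S ∪ S⁻¹ ∪ {1_G}, and supp(ξ_x) ⊆ x·B(1_G, D) for every x ∈ G. -/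

import Mathlib

/-- The word-metric ball `B(1_G, D)` with respect to a generating set `S`:
the set of elements of `G` expressible as a product of at most `D` elements
of `S ∪ S⁻¹`. -/
def wordBall {G : Type*} [Group G] (S : Set G) (D : ℕ) : Set G :=
  {g | ∃ l : List G, l.length ≤ D ∧ (∀ x ∈ l, x ∈ S ∨ x⁻¹ ∈ S) ∧ l.prod = g}

namespace StmtAux

lemma one_mem_wordBall {G : Type*} [Group G] (S : Set G) (D : ℕ) : (1:G) ∈ wordBall S D :=
  ⟨[], by simp⟩

lemma wordBall_mono {G : Type*} [Group G] (S : Set G) {D E : ℕ} (h : D ≤ E) :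
    wordBall S D ⊆ wordBall S E := fun g ⟨l, hl, he, hp⟩ => ⟨l, hl.trans h, he, hp⟩

lemma inv_mem_wordBall {G : Type*} [Group G] {S : Set G} {D : ℕ} {g : G}
    (hg : g ∈ wordBall S D) : g⁻¹ ∈ wordBall S D := by
  obtain ⟨l, hl, he, hp⟩ := hg
  refine ⟨(l.map (·⁻¹)).reverse, by simpa using hl, ?_, ?_⟩
  · intro x hx
    simp only [List.mem_reverse, List.mem_map] at hx
    obtain ⟨a, ha, rfl⟩ := hx
    rcases he a ha with h | h
    · exact Or.inr (by simpa using h)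
    · exact Or.inl h
  · rw [← hp, List.prod_inv_reverse]

lemma mul_mem_wordBall {G : Type*} [Group G] {S : Set G} {D : ℕ} {g a : G}
    (hg : g ∈ wordBall S D) (ha : a ∈ S ∨ a⁻¹ ∈ S) : g * a ∈ wordBall S (D + 1) := by
  obtain ⟨l, hl, he, hp⟩ := hg
  refine ⟨l ++ [a], by simpa using hl, ?_, by simp [hp]⟩
  intro x hx
  rcases List.mem_append.mp hx with h | h
  · exact he x h
  · simp only [List.mem_singleton] at h; subst h; exact ha

lemma wordBall_finite {G : Type*} [Group G] [DecidableEq G] (S : Finset G) (D : ℕ) :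
    (wordBall (S : Set G) D).Finite := by
  induction D with
  | zero =>
    apply Set.Finite.subset (Set.finite_singleton (1:G))
    rintro g ⟨l, hl, -, hp⟩
    rw [Nat.le_zero, List.length_eq_zero_iff] at hl
    simp [hl] at hp
    simp [← hp]
  | succ D ih =>
    have hsub : wordBall (S : Set G) (D+1) ⊆
        wordBall (S : Set G) D ∪ ⋃ a ∈ ((S ∪ S.image (·⁻¹) : Finset G) : Set G),
          (· * a) '' wordBall (S : Set G) D := by
      rintro g ⟨l, hl, he, hp⟩
      rcases l.eq_nil_or_concat with rfl | ⟨l', a, rfl⟩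
      · exact Or.inl ⟨[], by simp, by simp, hp⟩
      · right
        have ha := he a (by simp)
        have hamem : a ∈ ((S ∪ S.image (·⁻¹) : Finset G) : Set G) := by
          simp only [Finset.coe_union, Finset.coe_image, Set.mem_union, Finset.mem_coe]
          rcases ha with h | h
          · exact Or.inl h
          · exact Or.inr ⟨a⁻¹, by simpa using h⟩
        refine Set.mem_biUnion hamem
          ⟨l'.prod, ⟨l', ?_, fun x hx => he x (by simp [hx]), rfl⟩, by simpa using hp⟩
        simpa using Nat.le_of_succ_le_succ (by simpa using hl)
    exact Set.Finite.subset (ih.union (Set.Finite.biUnion (Finset.finite_toSet _)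
      (fun a _ => ih.image _))) hsub

end StmtAux
namespace StmtAux

/-- `(√a - √b)² ≤ |a - b|` for nonnegative `a, b`. -/
lemma sq_sqrt_sub_sqrt_le {a b : ℝ} (ha : 0 ≤ a) (hb : 0 ≤ b) :
    (Real.sqrt a - Real.sqrt b) ^ 2 ≤ |a - b| := by
  have h1 : Real.sqrt a ^ 2 = a := Real.sq_sqrt ha
  have h2 : Real.sqrt b ^ 2 = b := Real.sq_sqrt hb
  have h3 : 0 ≤ Real.sqrt a := Real.sqrt_nonneg a
  have h4 : 0 ≤ Real.sqrt b := Real.sqrt_nonneg b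
  rcases le_total a b with h | h
  · rw [abs_of_nonpos (by linarith)]
    nlinarith [Real.sqrt_le_sqrt h]
  · rw [abs_of_nonneg (by linarith)]
    nlinarith [Real.sqrt_le_sqrt h]

/-- Cauchy-Schwarz corollary: `∑ f g ≤ √(∑ f²) · √(∑ g²)`. -/
lemma sum_mul_le_sqrt_mul_sqrt {ι : Type*} (s : Finset ι) (f g : ι → ℝ) :
    ∑ i ∈ s, f i * g i ≤ Real.sqrt (∑ i ∈ s, f i ^ 2) * Real.sqrt (∑ i ∈ s, g i ^ 2) := by
  have hcs := Finset.sum_mul_sq_le_sq_mul_sq s f g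
  have h1 : (0:ℝ) ≤ ∑ i ∈ s, f i ^ 2 := Finset.sum_nonneg fun i _ => sq_nonneg _
  have h2 : (0:ℝ) ≤ ∑ i ∈ s, g i ^ 2 := Finset.sum_nonneg fun i _ => sq_nonneg _
  calc ∑ i ∈ s, f i * g i ≤ |∑ i ∈ s, f i * g i| := le_abs_self _
    _ ≤ Real.sqrt (∑ i ∈ s, f i ^ 2) * Real.sqrt (∑ i ∈ s, g i ^ 2) := by
        rw [← Real.sqrt_mul_self (abs_nonneg _), ← Real.sqrt_mul h1]
        apply Real.sqrt_le_sqrt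
        calc |∑ i ∈ s, f i * g i| * |∑ i ∈ s, f i * g i| = (∑ i ∈ s, f i * g i)^2 := by
              rw [← abs_mul, ← sq, abs_sq]
          _ ≤ _ := hcs

/-- `(√(∑ a²) - √(∑ b²))² ≤ ∑ (a - b)²`. -/
lemma sq_sqrt_sum_sub_le {ι : Type*} (s : Finset ι) (a b : ι → ℝ) :
    (Real.sqrt (∑ i ∈ s, a i ^ 2) - Real.sqrt (∑ i ∈ s, b i ^ 2)) ^ 2
      ≤ ∑ i ∈ s, (a i - b i) ^ 2 := by
  have hA : (0:ℝ) ≤ ∑ i ∈ s, a i ^ 2 := Finset.sum_nonneg fun i _ => sq_nonneg _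
  have hB : (0:ℝ) ≤ ∑ i ∈ s, b i ^ 2 := Finset.sum_nonneg fun i _ => sq_nonneg _
  have hab := sum_mul_le_sqrt_mul_sqrt s a b
  have e1 : Real.sqrt (∑ i ∈ s, a i ^ 2) ^ 2 = ∑ i ∈ s, a i ^ 2 := Real.sq_sqrt hA
  have e2 : Real.sqrt (∑ i ∈ s, b i ^ 2) ^ 2 = ∑ i ∈ s, b i ^ 2 := Real.sq_sqrt hB
  have expand : ∑ i ∈ s, (a i - b i) ^ 2
      = ∑ i ∈ s, a i ^ 2 - 2 * ∑ i ∈ s, a i * b i + ∑ i ∈ s, b i ^ 2 := by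
    rw [Finset.mul_sum, ← Finset.sum_sub_distrib, ← Finset.sum_add_distrib]
    exact Finset.sum_congr rfl fun i _ => by ring
  nlinarith [expand, e1, e2, hab]

/-- ℓ²-triangle inequality in sum form. -/
lemma l2_triangle {ι : Type*} (s : Finset ι) (a b c : ι → ℝ) {A B : ℝ}
    (hA : 0 ≤ A) (hB : 0 ≤ B)
    (hab : ∑ i ∈ s, (a i - b i) ^ 2 ≤ A ^ 2) (hbc : ∑ i ∈ s, (b i - c i) ^ 2 ≤ B ^ 2) :
    ∑ i ∈ s, (a i - c i) ^ 2 ≤ (A + B) ^ 2 := by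
  have key := sum_mul_le_sqrt_mul_sqrt s (fun i => a i - b i) (fun i => b i - c i)
  have h1 : (0:ℝ) ≤ ∑ i ∈ s, (a i - b i) ^ 2 := Finset.sum_nonneg fun i _ => sq_nonneg _
  have h2 : (0:ℝ) ≤ ∑ i ∈ s, (b i - c i) ^ 2 := Finset.sum_nonneg fun i _ => sq_nonneg _
  have s1 : Real.sqrt (∑ i ∈ s, (a i - b i) ^ 2) ≤ A := by
    rw [show A = Real.sqrt (A^2) from (Real.sqrt_sq hA).symm]
    exact Real.sqrt_le_sqrt hab
  have s2 : Real.sqrt (∑ i ∈ s, (b i - c i) ^ 2) ≤ B := by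
    rw [show B = Real.sqrt (B^2) from (Real.sqrt_sq hB).symm]
    exact Real.sqrt_le_sqrt hbc
  have e1 := Real.sq_sqrt h1
  have e2 := Real.sq_sqrt h2
  have expand : ∑ i ∈ s, (a i - c i) ^ 2
      = ∑ i ∈ s, (a i - b i) ^ 2 + 2 * ∑ i ∈ s, (a i - b i) * (b i - c i)
        + ∑ i ∈ s, (b i - c i) ^ 2 := by
    rw [Finset.mul_sum, ← Finset.sum_add_distrib, ← Finset.sum_add_distrib]
    exact Finset.sum_congr rfl fun i _ => by ring
  nlinarith [Real.sqrt_nonneg (∑ i ∈ s, (a i - b i) ^ 2),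
    Real.sqrt_nonneg (∑ i ∈ s, (b i - c i) ^ 2)]

/-- difference of sums bounded by sums over set differences. -/
lemma abs_sum_sub_sum_le {ι : Type*} [DecidableEq ι] (P Q : Finset ι) (h : ι → ℝ)
    (hh : ∀ i, 0 ≤ h i) :
    |∑ i ∈ P, h i - ∑ i ∈ Q, h i| ≤ ∑ i ∈ P \ Q, h i + ∑ i ∈ Q \ P, h i := by
  have e1 : ∑ i ∈ P ∩ Q, h i + ∑ i ∈ P \ Q, h i = ∑ i ∈ P, h i :=
    Finset.sum_inter_add_sum_sdiff P Q h
  have e2 : ∑ i ∈ Q ∩ P, h i + ∑ i ∈ Q \ P, h i = ∑ i ∈ Q, h i :=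
    Finset.sum_inter_add_sum_sdiff Q P h
  have e3 : P ∩ Q = Q ∩ P := Finset.inter_comm P Q
  have n1 : (0:ℝ) ≤ ∑ i ∈ P \ Q, h i := Finset.sum_nonneg fun i _ => hh i
  have n2 : (0:ℝ) ≤ ∑ i ∈ Q \ P, h i := Finset.sum_nonneg fun i _ => hh i
  rw [abs_le]
  constructor <;> [skip; skip] <;> rw [e3] at e1 <;> linarith

end StmtAux

open StmtAux

theorem stmt_11 {G : Type*} [Group G] [DecidableEq G] (S : Finset G)
    (hgen : Subgroup.closure (S : Set G) = ⊤)
    (hamen : ∀ T : Finset G, T.Nonempty → ∀ δ : ℝ, 0 < δ →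
      ∃ F : Finset G, F.Nonempty ∧
        ∀ g ∈ T, ((F \ F.image (· * g)).card : ℝ) ≤ δ * F.card)
    (ε : ℝ) (hε : 0 < ε) (D : ℕ) :
    (∃ f : G → ℝ, (∀ γ, 0 ≤ f γ) ∧ (∑' γ, f γ ^ 2 = 1) ∧
      (∀ s ∈ S, ∑' γ, (f γ - f (γ * s)) ^ 2 ≤ ε ^ 2) ∧
      Function.support f ⊆ wordBall (S : Set G) D)
    ↔
    (∃ ξ : G → G → ℝ, (∀ x γ, 0 ≤ ξ x γ) ∧ (∀ x, ∑' γ, ξ x γ ^ 2 = 1) ∧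
      (∀ x y : G, x⁻¹ * y ∈ (S : Set G) ∪ (S : Set G)⁻¹ ∪ {1} →
        ∑' γ, (ξ x γ - ξ y γ) ^ 2 ≤ ε ^ 2) ∧
      (∀ x : G, Function.support (ξ x) ⊆ (x * ·) '' wordBall (S : Set G) D)) := by
  constructor
  · rintro ⟨f, hf0, hf1, hf2, hf3⟩
    refine ⟨fun x γ => f (γ⁻¹ * x), fun x γ => hf0 _, ?_, ?_, ?_⟩
    · intro x
      have e : ∑' γ : G, f (γ⁻¹ * x) ^ 2 = ∑' γ : G, f γ ^ 2 := by
        exact Equiv.tsum_eq (⟨fun γ => γ⁻¹ * x, fun γ => (γ * x⁻¹)⁻¹, fun γ => by group,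
          fun γ => by group⟩ : G ≃ G) (fun γ => f γ ^ 2)
      rw [e, hf1]
    · intro x y hxy
      have e : ∑' γ : G, (f (γ⁻¹ * x) - f (γ⁻¹ * y)) ^ 2
          = ∑' h : G, (f h - f (h * (x⁻¹ * y))) ^ 2 := by
        rw [← Equiv.tsum_eq (⟨fun h => x * h⁻¹, fun γ => (x⁻¹ * γ)⁻¹, fun γ => by group,
          fun γ => by group⟩ : G ≃ G) (fun γ => (f (γ⁻¹ * x) - f (γ⁻¹ * y)) ^ 2)]
        exact tsum_congr fun h => by
          rw [show ((⟨fun h => x * h⁻¹, fun γ => (x⁻¹ * γ)⁻¹, fun γ => by group,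
            fun γ => by group⟩ : G ≃ G) h) = x * h⁻¹ from rfl,
            show (x * h⁻¹)⁻¹ * x = h by group, show (x * h⁻¹)⁻¹ * y = h * (x⁻¹ * y) by group]
      rw [e]
      rcases hxy with (hs | hs) | hs
      · exact hf2 _ hs
      · rw [Set.mem_inv] at hs
        have e2 : ∑' h : G, (f h - f (h * (x⁻¹ * y))) ^ 2
            = ∑' h : G, (f h - f (h * (x⁻¹ * y)⁻¹)) ^ 2 := by
          rw [← Equiv.tsum_eq (Equiv.mulRight ((x⁻¹ * y)⁻¹))
            (fun h => (f h - f (h * (x⁻¹ * y))) ^ 2)]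
          exact tsum_congr fun h => by
            rw [Equiv.coe_mulRight, show h * (x⁻¹*y)⁻¹ * (x⁻¹*y) = h by group]
            ring
        rw [e2]
        exact hf2 _ hs
      · rw [Set.mem_singleton_iff] at hs
        rw [hs]
        simp
        positivity
    · intro x
      intro γ hγ
      have hm : γ⁻¹ * x ∈ wordBall (S : Set G) D := hf3 hγ
      exact ⟨x⁻¹ * γ, by simpa using inv_mem_wordBall hm, by group⟩
  · rintro ⟨ξ, h0, h1, h2, h3⟩
    -- finite balls
    set B0 : Finset G := (wordBall_finite S D).toFinset with hB0def
    set B1 : Finset G := (wordBall_finite S (D+1)).toFinset with hB1def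
    have hmemB0 : ∀ γ : G, γ ∈ B0 ↔ γ ∈ wordBall (S : Set G) D := fun γ =>
      Set.Finite.mem_toFinset _
    have hmemB1 : ∀ γ : G, γ ∈ B1 ↔ γ ∈ wordBall (S : Set G) (D+1) := fun γ =>
      Set.Finite.mem_toFinset _
    -- summability
    have hsummable : ∀ x : G, Summable (fun γ => ξ x γ ^ 2) := by
      intro x
      apply summable_of_ne_finset_zero (s := B0.image (x * ·))
      intro γ hγ
      by_contra h
      have hne : ξ x γ ≠ 0 := fun h' => h (by simp [h'])
      obtain ⟨b, hb, rfl⟩ := h3 x hne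
      exact hγ (Finset.mem_image.mpr ⟨b, (hmemB0 b).mpr hb, rfl⟩)
    have hsumdiff : ∀ x y : G, Summable (fun γ => (ξ x γ - ξ y γ) ^ 2) := by
      intro x y
      apply summable_of_ne_finset_zero (s := B0.image (x * ·) ∪ B0.image (y * ·))
      intro γ hγ
      rw [Finset.mem_union, not_or] at hγ
      have hx : ξ x γ = 0 := by
        by_contra h
        obtain ⟨b, hb, rfl⟩ := h3 x h
        exact hγ.1 (Finset.mem_image.mpr ⟨b, (hmemB0 b).mpr hb, rfl⟩)
      have hy : ξ y γ = 0 := by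
        by_contra h
        obtain ⟨b, hb, rfl⟩ := h3 y h
        exact hγ.2 (Finset.mem_image.mpr ⟨b, (hmemB0 b).mpr hb, rfl⟩)
      rw [hx, hy]; ring
    -- translate-sum lemmas
    have key_le : ∀ (x : G) (t : Finset G) (g : G → ℝ), (∀ γ, 0 ≤ g γ) → Summable g →
        ∑ γ ∈ t, g (x * γ⁻¹) ≤ ∑' γ, g γ := by
      intro x t g hg hs
      have hinj : ∀ a ∈ t, ∀ b ∈ t, x * a⁻¹ = x * b⁻¹ → a = b := fun a _ b _ h =>
        inv_injective (mul_left_cancel h)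
      rw [← Finset.sum_image hinj]
      exact hs.sum_le_tsum _ (fun γ _ => hg γ)
    have key_eq : ∀ (x : G) (g : G → ℝ),
        (∀ γ, g γ ≠ 0 → γ ∈ (x * ·) '' wordBall (S : Set G) D) → Summable g →
        ∑ γ ∈ B0, g (x * γ⁻¹) = ∑' γ, g γ := by
      intro x g hsupp hs
      have hinj : ∀ a ∈ B0, ∀ b ∈ B0, x * a⁻¹ = x * b⁻¹ → a = b := fun a _ b _ h =>
        inv_injective (mul_left_cancel h)
      rw [← Finset.sum_image hinj]
      refine (tsum_eq_sum ?_).symm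
      intro γ hγ
      by_contra h
      obtain ⟨b, hb, rfl⟩ := hsupp γ h
      exact hγ (Finset.mem_image.mpr ⟨b⁻¹, (hmemB0 _).mpr (inv_mem_wordBall hb), by group⟩)
    -- trivial case S = ∅
    rcases S.eq_empty_or_nonempty with rfl | hSne
    · refine ⟨ξ 1, fun γ => h0 1 γ, h1 1, fun s hs => absurd hs (Finset.notMem_empty s), ?_⟩
      intro γ hγ
      have := h3 1 hγ
      simpa using this
    -- main case
    have hTne : (S ∪ S.image (·⁻¹) : Finset G).Nonempty := by
      obtain ⟨s0, hs0⟩ := hSne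
      exact ⟨s0, Finset.mem_union_left _ hs0⟩
    choose F hFne hF using fun n : ℕ => hamen (S ∪ S.image (·⁻¹)) hTne (1/((n:ℝ)+1))
      (by positivity)
    set θ : G → G → ℝ := fun x γ => ξ x (x * γ⁻¹) with hθdef
    set f : ℕ → G → ℝ := fun n γ =>
      Real.sqrt ((∑ x ∈ F n, θ x γ ^ 2) / ((F n).card : ℝ)) with hfdef
    have hc : ∀ n, (0:ℝ) < ((F n).card : ℝ) := fun n =>
      Nat.cast_pos.mpr (Finset.card_pos.mpr (hFne n))
    have hf0 : ∀ n γ, 0 ≤ f n γ := fun n γ => Real.sqrt_nonneg _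
    have hfsq : ∀ n γ, f n γ ^ 2 = (∑ x ∈ F n, θ x γ ^ 2) / ((F n).card : ℝ) := by
      intro n γ
      rw [hfdef]
      exact Real.sq_sqrt (by positivity)
    have hθsupp : ∀ x γ, θ x γ ≠ 0 → γ ∈ B0 := by
      intro x γ h
      obtain ⟨b, hb, he⟩ := h3 x h
      have : γ⁻¹ = b := (mul_left_cancel he).symm
      rw [hmemB0]
      have := inv_mem_wordBall (this ▸ hb)
      simpa using this
    have hfsupp : ∀ n γ, γ ∉ B0 → f n γ = 0 := by
      intro n γ hγ
      have hz : ∑ x ∈ F n, θ x γ ^ 2 = 0 := Finset.sum_eq_zero fun x _ => by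
        have : θ x γ = 0 := by by_contra h; exact hγ (hθsupp x γ h)
        rw [this]; ring
      rw [hfdef]
      simp [hz]
    have hθ1 : ∀ x : G, ∑ γ ∈ B0, θ x γ ^ 2 = 1 := by
      intro x
      have := key_eq x (fun γ => ξ x γ ^ 2) (fun γ h => h3 x (fun h' => h (by simp [h'])))
        (hsummable x)
      rw [hθdef]
      simpa [h1 x] using this
    have hθle1 : ∀ (x γ : G), θ x γ ^ 2 ≤ 1 := by
      intro x γ
      calc θ x γ ^ 2 ≤ ∑' δ, ξ x δ ^ 2 :=
            Summable.le_tsum (hsummable x) (x * γ⁻¹) (fun b _ => sq_nonneg _)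
        _ = 1 := h1 x
    have hf_norm : ∀ n, ∑ γ ∈ B0, f n γ ^ 2 = 1 := by
      intro n
      have : ∑ γ ∈ B0, f n γ ^ 2
          = (∑ x ∈ F n, ∑ γ ∈ B0, θ x γ ^ 2) / ((F n).card : ℝ) := by
        simp_rw [hfsq]
        rw [← Finset.sum_div, Finset.sum_comm]
      rw [this]
      simp only [hθ1]
      rw [Finset.sum_const, nsmul_eq_mul, mul_one, div_self (hc n).ne']
    have hfle1 : ∀ n γ, f n γ ≤ 1 := by
      intro n γ
      rw [hfdef]
      rw [Real.sqrt_le_one, div_le_one (hc n)]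
      calc ∑ x ∈ F n, θ x γ ^ 2 ≤ ∑ x ∈ F n, 1 :=
            Finset.sum_le_sum fun x _ => hθle1 x γ
        _ = ((F n).card : ℝ) := by simp
    -- key estimate
    have hkey : ∀ (n : ℕ), ∀ s ∈ S, ∑ γ ∈ B1, (f n γ - f n (γ * s)) ^ 2
        ≤ (ε + Real.sqrt (2 * (1/((n:ℝ)+1)))) ^ 2 := by
      intro n s hs
      set c : ℝ := ((F n).card : ℝ) with hcdef
      set g : G → ℝ := fun γ => Real.sqrt ((∑ x ∈ F n, θ (x * s) (γ * s) ^ 2) / c) with hgdef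
      -- θ rewriting identities
      have hθ_id : ∀ x γ : G, θ (x * s) (γ * s) = ξ (x * s) (x * γ⁻¹) := by
        intro x γ
        rw [hθdef]
        simp only []
        congr 1
        group
      have hθ_id2 : ∀ y γ : G, θ y (γ * s) = ξ y ((y * s⁻¹) * γ⁻¹) := by
        intro y γ
        rw [hθdef]
        simp only []
        congr 1
        group
      -- Step A
      have stepA : ∑ γ ∈ B1, (f n γ - g γ) ^ 2 ≤ ε ^ 2 := by
        have ptwise : ∀ γ : G, (f n γ - g γ) ^ 2
            ≤ (∑ x ∈ F n, (θ x γ - θ (x * s) (γ * s)) ^ 2) / c := by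
          intro γ
          have h := sq_sqrt_sum_sub_le (F n) (fun x => θ x γ / Real.sqrt c)
            (fun x => θ (x * s) (γ * s) / Real.sqrt c)
          simp only [div_sub_div_same, div_pow, Real.sq_sqrt (show (0:ℝ) ≤ c from (hc n).le), ← Finset.sum_div] at h
          rw [hfdef, hgdef]
          exact h
        calc ∑ γ ∈ B1, (f n γ - g γ) ^ 2
            ≤ ∑ γ ∈ B1, (∑ x ∈ F n, (θ x γ - θ (x * s) (γ * s)) ^ 2) / c :=
              Finset.sum_le_sum fun γ _ => ptwise γ
          _ = (∑ x ∈ F n, ∑ γ ∈ B1, (θ x γ - θ (x * s) (γ * s)) ^ 2) / c := by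
              rw [← Finset.sum_div, Finset.sum_comm]
          _ ≤ (∑ x ∈ F n, ε ^ 2) / c := by
              apply div_le_div_of_nonneg_right ?_ (hc n).le
              apply Finset.sum_le_sum
              intro x _
              have hrw : ∑ γ ∈ B1, (θ x γ - θ (x * s) (γ * s)) ^ 2
                  = ∑ γ ∈ B1, (fun h => (ξ x h - ξ (x * s) h) ^ 2) (x * γ⁻¹) :=
                Finset.sum_congr rfl fun γ _ => by rw [hθ_id x γ, hθdef]
              rw [hrw]
              calc ∑ γ ∈ B1, (fun h => (ξ x h - ξ (x * s) h) ^ 2) (x * γ⁻¹)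
                  ≤ ∑' h, (ξ x h - ξ (x * s) h) ^ 2 :=
                    key_le x B1 _ (fun γ => sq_nonneg _) (hsumdiff x (x * s))
                _ ≤ ε ^ 2 := h2 x (x * s) (by
                    left; left
                    simpa using hs)
          _ = ε ^ 2 := by
              rw [Finset.sum_const, nsmul_eq_mul]
              field_simp
              rw [hcdef]; exact div_self (hc n).ne'
        done
      -- Step B
      have stepB : ∑ γ ∈ B1, (g γ - f n (γ * s)) ^ 2 ≤ 2 * (1/((n:ℝ)+1)) := by
        set P : Finset G := (F n).image (· * s) with hPdef
        have hinj : Function.Injective (· * s) := fun a b h => by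
          simpa using mul_right_cancel h
        have hsum_im : ∀ γ : G, ∑ x ∈ F n, θ (x * s) (γ * s) ^ 2
            = ∑ y ∈ P, θ y (γ * s) ^ 2 := by
          intro γ
          rw [hPdef, Finset.sum_image (fun a _ b _ h => hinj h)]
        have ptwise : ∀ γ : G, (g γ - f n (γ * s)) ^ 2 ≤
            (∑ y ∈ P \ F n, θ y (γ * s) ^ 2 + ∑ y ∈ F n \ P, θ y (γ * s) ^ 2) / c := by
          intro γ
          have h := sq_sqrt_sub_sqrt_le
            (a := (∑ y ∈ P, θ y (γ * s) ^ 2) / c)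
            (b := (∑ y ∈ F n, θ y (γ * s) ^ 2) / c)
            (by positivity) (by positivity)
          have e : g γ - f n (γ * s)
              = Real.sqrt ((∑ y ∈ P, θ y (γ * s) ^ 2) / c)
                - Real.sqrt ((∑ y ∈ F n, θ y (γ * s) ^ 2) / c) := by
            rw [hgdef, hfdef]
            simp only []
            rw [hsum_im γ]
          rw [e]
          refine h.trans ?_
          rw [← sub_div, abs_div, abs_of_pos (hc n)]
          exact div_le_div_of_nonneg_right
            (abs_sum_sub_sum_le P (F n) _ (fun y => sq_nonneg _)) (hc n).le
        have inner_le_one : ∀ y : G, ∑ γ ∈ B1, θ y (γ * s) ^ 2 ≤ 1 := by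
          intro y
          have hrw : ∑ γ ∈ B1, θ y (γ * s) ^ 2
              = ∑ γ ∈ B1, (fun h => ξ y h ^ 2) ((y * s⁻¹) * γ⁻¹) :=
            Finset.sum_congr rfl fun γ _ => by rw [hθ_id2 y γ]
          rw [hrw]
          calc ∑ γ ∈ B1, (fun h => ξ y h ^ 2) ((y * s⁻¹) * γ⁻¹)
              ≤ ∑' h, ξ y h ^ 2 := key_le (y * s⁻¹) B1 _ (fun γ => sq_nonneg _) (hsummable y)
            _ = 1 := h1 y
        -- cardinality bounds
        have hcard1 : ((F n \ P).card : ℝ) ≤ (1/((n:ℝ)+1)) * c := by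
          rw [hPdef]
          exact hF n s (Finset.mem_union_left _ hs)
        have hPdiff : P \ F n = ((F n) \ (F n).image (· * s⁻¹)).image (· * s) := by
          ext y
          simp only [hPdef, Finset.mem_sdiff, Finset.mem_image]
          constructor
          · rintro ⟨⟨x, hx, rfl⟩, hy⟩
            refine ⟨x, ⟨hx, ?_⟩, rfl⟩
            rintro ⟨z, hz, hzx⟩
            exact hy (by rw [← hzx]; simpa [mul_assoc] using hz)
          · rintro ⟨x, ⟨hx, hnx⟩, rfl⟩
            refine ⟨⟨x, hx, rfl⟩, fun hxs => hnx ⟨x * s, hxs, by group⟩⟩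
        have hcard2 : (((P \ F n)).card : ℝ) ≤ (1/((n:ℝ)+1)) * c := by
          rw [hPdiff, Finset.card_image_of_injective _ hinj]
          exact hF n s⁻¹ (Finset.mem_union_right _
            (Finset.mem_image.mpr ⟨s, hs, rfl⟩))
        calc ∑ γ ∈ B1, (g γ - f n (γ * s)) ^ 2
            ≤ ∑ γ ∈ B1, (∑ y ∈ P \ F n, θ y (γ * s) ^ 2
                + ∑ y ∈ F n \ P, θ y (γ * s) ^ 2) / c :=
              Finset.sum_le_sum fun γ _ => ptwise γ
          _ = ((∑ y ∈ P \ F n, ∑ γ ∈ B1, θ y (γ * s) ^ 2)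
                + ∑ y ∈ F n \ P, ∑ γ ∈ B1, θ y (γ * s) ^ 2) / c := by
              rw [← Finset.sum_div]
              congr 1
              rw [Finset.sum_add_distrib, Finset.sum_comm (s := B1), Finset.sum_comm (s := B1)]
          _ ≤ ((((P \ F n).card : ℝ)) + (((F n \ P).card : ℝ))) / c := by
              apply div_le_div_of_nonneg_right ?_ (hc n).le
              have b1 : ∑ y ∈ P \ F n, ∑ γ ∈ B1, θ y (γ * s) ^ 2 ≤ ((P \ F n).card : ℝ) := by
                calc ∑ y ∈ P \ F n, ∑ γ ∈ B1, θ y (γ * s) ^ 2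
                    ≤ ∑ y ∈ P \ F n, (1:ℝ) := Finset.sum_le_sum fun y _ => inner_le_one y
                  _ = ((P \ F n).card : ℝ) := by simp
              have b2 : ∑ y ∈ F n \ P, ∑ γ ∈ B1, θ y (γ * s) ^ 2 ≤ ((F n \ P).card : ℝ) := by
                calc ∑ y ∈ F n \ P, ∑ γ ∈ B1, θ y (γ * s) ^ 2
                    ≤ ∑ y ∈ F n \ P, (1:ℝ) := Finset.sum_le_sum fun y _ => inner_le_one y
                  _ = ((F n \ P).card : ℝ) := by simp
              linarith
          _ ≤ ((1/((n:ℝ)+1)) * c + (1/((n:ℝ)+1)) * c) / c := by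
              apply div_le_div_of_nonneg_right ?_ (hc n).le
              linarith
          _ = 2 * (1/((n:ℝ)+1)) := by
              field_simp
              rw [mul_div_cancel_left₀ _ (show c ≠ 0 from (hc n).ne')]; norm_num
      -- combine
      refine l2_triangle B1 (f n) g (fun γ => f n (γ * s)) hε.le (Real.sqrt_nonneg _)
        stepA ?_
      rw [Real.sq_sqrt (by positivity)]
      exact stepB
    -- compactness and limit
    have hu : ∀ n : ℕ, (fun i : ↥B0 => f n i) ∈ Set.Icc (0 : ↥B0 → ℝ) 1 := by
      intro n
      exact ⟨fun i => hf0 n i, fun i => hfle1 n i⟩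
    obtain ⟨L, hL, φ, hφ, hconv⟩ :=
      (isCompact_Icc (a := (0 : ↥B0 → ℝ)) (b := 1)).tendsto_subseq hu
    classical
    set flim : G → ℝ := fun γ => if h : γ ∈ B0 then L ⟨γ, h⟩ else 0 with hflimdef
    have hpt : ∀ γ : G, Filter.Tendsto (fun k => f (φ k) γ) Filter.atTop (nhds (flim γ)) := by
      intro γ
      by_cases h : γ ∈ B0
      · have := tendsto_pi_nhds.mp hconv ⟨γ, h⟩
        rw [hflimdef]
        simpa [dif_pos h] using this
      · have hz : ∀ k, f (φ k) γ = 0 := fun k => hfsupp (φ k) γ h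
        rw [hflimdef]
        simp only [dif_neg h]
        simpa [hz] using (tendsto_const_nhds : Filter.Tendsto (fun _ : ℕ => (0:ℝ))
          Filter.atTop (nhds 0))
    have hflim0 : ∀ γ, 0 ≤ flim γ := by
      intro γ
      rw [hflimdef]
      by_cases h : γ ∈ B0
      · simp only [dif_pos h]
        exact hL.1 ⟨γ, h⟩
      · simp [dif_neg h]
    have hflimsupp : ∀ γ, γ ∉ B0 → flim γ = 0 := by
      intro γ h
      rw [hflimdef]
      simp [dif_neg h]
    refine ⟨flim, hflim0, ?_, ?_, ?_⟩
    · -- norm one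
      rw [tsum_eq_sum (s := B0) (fun γ hγ => by rw [hflimsupp γ hγ]; ring)]
      have tends : Filter.Tendsto (fun k => ∑ γ ∈ B0, f (φ k) γ ^ 2) Filter.atTop
          (nhds (∑ γ ∈ B0, flim γ ^ 2)) :=
        tendsto_finset_sum _ fun γ _ => (hpt γ).pow 2
      have hconst : (fun k => ∑ γ ∈ B0, f (φ k) γ ^ 2) = fun _ => (1:ℝ) := by
        funext k
        exact hf_norm (φ k)
      rw [hconst] at tends
      exact tendsto_nhds_unique tends tendsto_const_nhds
    · -- the ε-condition
      intro s hs
      have hvanish : ∀ γ ∉ B1, (flim γ - flim (γ * s)) ^ 2 = 0 := by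
        intro γ hγ
        have hγ0 : γ ∉ B0 := by
          intro h
          exact hγ ((hmemB1 γ).mpr (wordBall_mono _ (Nat.le_succ D) ((hmemB0 γ).mp h)))
        have hγs : γ * s ∉ B0 := by
          intro h
          apply hγ
          rw [hmemB1]
          have : (γ * s) * s⁻¹ ∈ wordBall (S : Set G) (D + 1) :=
            mul_mem_wordBall ((hmemB0 _).mp h) (Or.inr (by simpa using hs))
          simpa using this
        rw [hflimsupp γ hγ0, hflimsupp _ hγs]
        ring
      rw [tsum_eq_sum (s := B1) hvanish]
      have tendsL : Filter.Tendsto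
          (fun k => ∑ γ ∈ B1, (f (φ k) γ - f (φ k) (γ * s)) ^ 2) Filter.atTop
          (nhds (∑ γ ∈ B1, (flim γ - flim (γ * s)) ^ 2)) :=
        tendsto_finset_sum _ fun γ _ => ((hpt γ).sub (hpt (γ * s))).pow 2
      have hδ0 : Filter.Tendsto (fun k : ℕ => 1/((φ k : ℝ)+1)) Filter.atTop (nhds 0) := by
        apply tendsto_of_tendsto_of_tendsto_of_le_of_le
          (tendsto_const_nhds : Filter.Tendsto (fun _ : ℕ => (0:ℝ)) _ _)
          tendsto_one_div_add_atTop_nhds_zero_nat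
        · intro k
          positivity
        · intro k
          apply one_div_le_one_div_of_le (by positivity)
          have : (k : ℝ) ≤ (φ k : ℝ) := Nat.cast_le.mpr hφ.le_apply
          linarith
      have tendsR : Filter.Tendsto
          (fun k => (ε + Real.sqrt (2 * (1/((φ k : ℝ)+1)))) ^ 2) Filter.atTop
          (nhds (ε ^ 2)) := by
        have h2δ : Filter.Tendsto (fun k : ℕ => 2 * (1/((φ k : ℝ)+1))) Filter.atTop
            (nhds 0) := by
          simpa using hδ0.const_mul 2
        have hsq : Filter.Tendsto (fun k => Real.sqrt (2 * (1/((φ k : ℝ)+1)))) Filter.atTop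
            (nhds 0) := by
          have h' := (Real.continuous_sqrt.tendsto 0).comp h2δ
          rw [Real.sqrt_zero] at h'
          exact h'
        have := ((tendsto_const_nhds (x := ε) (f := Filter.atTop (α := ℕ))).add hsq).pow 2
        simpa using this
      exact le_of_tendsto_of_tendsto' tendsL tendsR fun k => hkey (φ k) s hs
    · -- support
      intro γ hγ
      have : γ ∈ B0 := by
        by_contra h
        exact hγ (hflimsupp γ h)
      exact (hmemB0 γ).mp this
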